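/- Fix A with 1 < A < 2 and suppose F : ℝ → ℝ satisfies −A·F(t) − 1 < F(2t) < −A·F(t) + 1 for all t > 0. If for some t > 0 and h > 0 one has F(t) > 1/(A−1) + h, then for every even n, F(2ⁿ t) > 1/(A−1) + h·Aⁿ, and for every odd n, F(2ⁿ t) < −1/(A−1) − h·Aⁿ. Consequently liminf_{t→+∞} F(t) = −∞ and limsup_{t→+∞} F(t) = +∞. -/
import Mathlib


open Filter

theorem stmt_4 (A : ℝ) (hA : 1 < A) (hA2 : A < 2) (F : ℝ → ℝ)
    (hdouble : ∀ t > 0, -A * F t - 1 < F (2 * t) ∧ F (2 * t) < -A * F t + 1)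
    (t h : ℝ) (ht : 0 < t) (hh : 0 < h) (hFt : F t > 1 / (A - 1) + h) :
    (∀ n : ℕ, Even n → F (2 ^ n * t) > 1 / (A - 1) + h * A ^ n) ∧
    (∀ n : ℕ, Odd n → F (2 ^ n * t) < -(1 / (A - 1)) - h * A ^ n) ∧
    (∀ C : ℝ, ∃ᶠ s in Filter.atTop, F s < C) ∧
    (∀ C : ℝ, ∃ᶠ s in Filter.atTop, C < F s) := by
  have hA1 : (0:ℝ) < A - 1 := by linarith
  have hB : (1 / (A - 1)) * (A - 1) = 1 := one_div_mul_cancel (ne_of_gt hA1)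
  have key : ∀ n : ℕ, (Even n → F (2 ^ n * t) > 1 / (A - 1) + h * A ^ n) ∧
      (Odd n → F (2 ^ n * t) < -(1 / (A - 1)) - h * A ^ n) := by
    intro n
    induction n with
    | zero =>
      refine ⟨fun _ => by simpa using hFt, fun hodd => absurd hodd (by decide)⟩
    | succ n ih =>
      have hpos : (0:ℝ) < 2 ^ n * t := by positivity
      have hd := hdouble (2 ^ n * t) hpos
      have h2 : (2:ℝ) * (2 ^ n * t) = 2 ^ (n+1) * t := by ring
      rw [h2] at hd
      have hApow : (0:ℝ) < A ^ n := by positivity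
      have hAn1 : A ^ (n+1) = A * A ^ n := by ring
      rcases Nat.even_or_odd n with he | ho
      · have h1 := ih.1 he
        refine ⟨fun h' => ?_, fun _ => ?_⟩
        · rw [Nat.even_add_one] at h'; exact absurd he h'
        · nlinarith [hd.2, mul_lt_mul_of_pos_left h1 (by linarith : (0:ℝ) < A)]
      · have h1 := ih.2 ho
        refine ⟨fun _ => ?_, fun h' => ?_⟩
        · nlinarith [hd.1, mul_lt_mul_of_pos_left h1 (by linarith : (0:ℝ) < A)]
        · rw [Nat.odd_add_one] at h'
          exact absurd ho h'
  have h2t : Tendsto (fun n : ℕ => (2:ℝ) ^ n * t) atTop atTop :=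
    (tendsto_pow_atTop_atTop_of_one_lt (by norm_num : (1:ℝ) < 2)).atTop_mul_const ht
  have hAt : Tendsto (fun n : ℕ => h * A ^ n) atTop atTop :=
    (tendsto_pow_atTop_atTop_of_one_lt hA).const_mul_atTop hh
  refine ⟨fun n hn => (key n).1 hn, fun n hn => (key n).2 hn, ?_, ?_⟩
  · intro C
    rw [Filter.frequently_atTop]
    intro b
    obtain ⟨N, hN⟩ := (Filter.eventually_atTop.mp ((h2t.eventually_ge_atTop b).and
      (hAt.eventually_ge_atTop (-C - 1 / (A - 1) + 1))))
    refine ⟨2 ^ (2 * N + 1) * t, (hN (2 * N + 1) (by omega)).1, ?_⟩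
    have := (key (2 * N + 1)).2 ⟨N, by ring⟩
    have := (hN (2 * N + 1) (by omega)).2
    linarith
  · intro C
    rw [Filter.frequently_atTop]
    intro b
    obtain ⟨N, hN⟩ := (Filter.eventually_atTop.mp ((h2t.eventually_ge_atTop b).and
      (hAt.eventually_ge_atTop (C - 1 / (A - 1) + 1))))
    refine ⟨2 ^ (2 * N) * t, (hN (2 * N) (by omega)).1, ?_⟩
    have := (key (2 * N)).1 ⟨N, by ring⟩
    have := (hN (2 * N) (by omega)).2
    linarith
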